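/- Soundness: every formula provable in the logic of blameworthiness with sacrifice is satisfied at every play of every game. -/

import Mathlib

/-- Formulas of the logic of blameworthiness with sacrifice over agent type `A`:
propositional variables, negation, implication, the universal modality `N`,
and the blameworthiness modality `B s C φ` ("coalition `C` is blameable for `φ`
with degree (sacrifice) `s`"). -/
inductive Formula (A : Type) : Type where
  | var : ℕ → Formula A
  | neg : Formula A → Formula A
  | impl : Formula A → Formula A → Formula A
  | N : Formula A → Formula A
  | B : ℝ → Finset A → Formula A → Formula A

namespace Formula

/-- Disjunction, defined as usual. -/
def or {A : Type} (φ ψ : Formula A) : Formula A := (φ.neg).impl ψ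

/-- Conjunction, defined as usual. -/
def and {A : Type} (φ ψ : Formula A) : Formula A := (φ.impl ψ.neg).neg

/-- The modality `N̄ φ := ¬ N ¬ φ` ("φ holds at some play"). -/
def nbar {A : Type} (φ : Formula A) : Formula A := (Formula.N φ.neg).neg

/-- A contradictory formula (used as the empty disjunction). -/
def fbot {A : Type} : Formula A := ((Formula.var 0).impl (Formula.var 0)).neg

end Formula

/-- Finite disjunction `χ₁ ∨ ⋯ ∨ χₙ` of a list of formulas. -/
def bigOr {A : Type} : List (Formula A) → Formula A
  | [] => Formula.fbot
  | φ :: l => l.foldl Formula.or φ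

/-- A game `(Δ, ‖·‖, d₀, Ω, P, π)`: a nonempty set of actions `Δ` with
nonnegative costs and a zero-cost action `d₀`, a set of outcomes `Ω`,
a set of plays `P` (pairs of a complete action profile and an outcome),
and a valuation `π` of propositional variables by sets of plays. -/
structure Game (A : Type) where
  Δ : Type
  Ω : Type
  cost : Δ → ℝ
  cost_nonneg : ∀ d : Δ, 0 ≤ cost d
  d0 : Δ
  cost_d0 : cost d0 = 0
  P : Set ((A → Δ) × Ω)
  π : ℕ → Set ((A → Δ) × Ω)

/-- Satisfaction relation `(δ,ω) ⊨ φ`.  In particular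
`(δ,ω) ⊨ B s C φ` iff `(δ,ω) ⊨ φ` and there is an action profile `γ` of the
coalition `C` of total cost `∑ a ∈ C, ‖γ(a)‖ ≤ s` such that every play
agreeing with `γ` on `C` falsifies `φ`. -/
def Sat {A : Type} (G : Game A) : ((A → G.Δ) × G.Ω) → Formula A → Prop
  | p, .var n => p ∈ G.π n
  | p, .neg φ => ¬ Sat G p φ
  | p, .impl φ ψ => Sat G p φ → Sat G p ψ
  | _, .N φ => ∀ q ∈ G.P, Sat G q φ
  | p, .B s C φ => Sat G p φ ∧ ∃ γ : A → G.Δ,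
      (∑ a ∈ C, G.cost (γ a)) ≤ s ∧
      ∀ q ∈ G.P, (∀ a ∈ C, q.1 a = γ a) → ¬ Sat G q φ

/-- A formula is a propositional tautology if it evaluates to true under every
Boolean valuation of formulas that respects negation and implication. -/
def Tautology {A : Type} (φ : Formula A) : Prop :=
  ∀ v : Formula A → Bool,
    (∀ ψ : Formula A, v ψ.neg = !(v ψ)) →
    (∀ ψ χ : Formula A, v (ψ.impl χ) = (!(v ψ) || v χ)) →
    v φ = true

/-- Theorems of the logic of blameworthiness with sacrifice: propositional
tautologies, the Truth, Distributivity, Negative Introspection, None to Blame,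
Monotonicity, Joint Responsibility, Blame for Cause, and Fairness axioms,
closed under Modus Ponens and Necessitation. -/
inductive Prov {A : Type} [DecidableEq A] : Formula A → Prop
  | taut {φ : Formula A} : Tautology φ → Prov φ
  | truthN {φ : Formula A} : Prov ((Formula.N φ).impl φ)
  | truthB {s : ℝ} {C : Finset A} {φ : Formula A} (hs : 0 ≤ s) :
      Prov ((Formula.B s C φ).impl φ)
  | distr {φ ψ : Formula A} :
      Prov ((Formula.N (φ.impl ψ)).impl ((Formula.N φ).impl (Formula.N ψ)))
  | negIntro {φ : Formula A} :
      Prov (((Formula.N φ).neg).impl (Formula.N ((Formula.N φ).neg)))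
  | noneToBlame {s : ℝ} {φ : Formula A} (hs : 0 ≤ s) :
      Prov ((Formula.B s (∅ : Finset A) φ).neg)
  | mono {s t : ℝ} {C D : Finset A} {φ : Formula A}
      (hs : 0 ≤ s) (hst : s ≤ t) (hCD : C ⊆ D) :
      Prov ((Formula.B s C φ).impl (Formula.B t D φ))
  | joint {s t : ℝ} {C D : Finset A} {φ ψ : Formula A}
      (hs : 0 ≤ s) (ht : 0 ≤ t) (hCD : Disjoint C D) :
      Prov (((Formula.B s C φ).nbar.and (Formula.B t D ψ).nbar).impl
        ((φ.or ψ).impl (Formula.B (s + t) (C ∪ D) (φ.or ψ))))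
  | cause {s : ℝ} {C : Finset A} {φ ψ : Formula A} (hs : 0 ≤ s) :
      Prov ((Formula.N (φ.impl ψ)).impl
        ((Formula.B s C ψ).impl (φ.impl (Formula.B s C φ))))
  | fair {s : ℝ} {C : Finset A} {φ : Formula A} (hs : 0 ≤ s) :
      Prov ((Formula.B s C φ).impl (Formula.N (φ.impl (Formula.B s C φ))))
  | mp {φ ψ : Formula A} : Prov (φ.impl ψ) → Prov φ → Prov ψ
  | nec {φ : Formula A} : Prov φ → Prov (Formula.N φ)

/-- Derivability `X ⊢ φ` from a set of hypotheses: hypotheses and theorems of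
the logic, closed under Modus Ponens. -/
inductive Derives {A : Type} [DecidableEq A] (X : Set (Formula A)) : Formula A → Prop
  | hyp {φ : Formula A} : φ ∈ X → Derives X φ
  | thm {φ : Formula A} : Prov φ → Derives X φ
  | mp {φ ψ : Formula A} : Derives X (φ.impl ψ) → Derives X φ → Derives X ψ

/-- Soundness: every theorem of the logic of blameworthiness
with sacrifice is satisfied at every play of every game. -/
theorem soundness {A : Type} [DecidableEq A] (φ : Formula A) (h : Prov φ) :
    ∀ (G : Game A), ∀ p ∈ G.P, Sat G p φ := by
  induction h with
  | @taut φ ht =>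
    intro G p hp
    classical
    have h1 : ∀ ψ : Formula A, decide (Sat G p ψ.neg) = !(decide (Sat G p ψ)) := by
      intro ψ; by_cases hψ : Sat G p ψ <;> simp [Sat, hψ]
    have h2 : ∀ ψ χ : Formula A,
        decide (Sat G p (ψ.impl χ)) = (!(decide (Sat G p ψ)) || decide (Sat G p χ)) := by
      intro ψ χ
      by_cases hψ : Sat G p ψ <;> by_cases hχ : Sat G p χ <;> simp [Sat, hψ, hχ]
    exact of_decide_eq_true (ht (fun ψ => decide (Sat G p ψ)) h1 h2)
  | truthN =>
    intro G p hp
    simp only [Sat]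
    intro hN
    exact hN p hp
  | truthB hs =>
    intro G p hp
    simp only [Sat]
    exact fun h => h.1
  | distr =>
    intro G p hp
    simp only [Sat]
    intro h1 h2 q hq
    exact h1 q hq (h2 q hq)
  | negIntro =>
    intro G p hp
    simp only [Sat]
    intro h q hq hall
    exact h hall
  | noneToBlame hs =>
    intro G p hp
    simp only [Sat]
    rintro ⟨hφ, γ, -, hforce⟩
    exact hforce p hp (by simp) hφ
  | @mono s t C D φ hs hst hCD =>
    intro G p hp
    simp only [Sat]
    rintro ⟨hφ, γ, hcost, hforce⟩
    refine ⟨hφ, fun a => if a ∈ C then γ a else G.d0, ?_, ?_⟩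
    · calc ∑ a ∈ D, G.cost (if a ∈ C then γ a else G.d0)
          = ∑ a ∈ D, (if a ∈ C then G.cost (γ a) else 0) := by
            apply Finset.sum_congr rfl
            intro a _
            by_cases h : a ∈ C <;> simp [h, G.cost_d0]
        _ = ∑ a ∈ D ∩ C, G.cost (γ a) := by rw [Finset.sum_ite_mem]
        _ = ∑ a ∈ C, G.cost (γ a) := by rw [Finset.inter_eq_right.mpr hCD]
        _ ≤ t := le_trans hcost hst
    · intro q hq hag
      apply hforce q hq
      intro a ha
      have := hag a (hCD ha)
      simpa [ha] using this
  | @joint s t C D φ ψ hs ht hCD =>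
    intro G p hp
    simp only [Formula.and, Formula.nbar, Formula.or, Sat]
    intro h hor
    obtain ⟨hA, hB⟩ := Classical.not_imp.mp h
    rw [not_not] at hB
    push_neg at hA hB
    have hC : ∃ q ∈ G.P, Sat G q (Formula.B s C φ) := hA
    have hD : ∃ q ∈ G.P, Sat G q (Formula.B t D ψ) := hB
    obtain ⟨q1, hq1, _, γ1, hc1, hf1⟩ := hC
    obtain ⟨q2, hq2, _, γ2, hc2, hf2⟩ := hD
    refine ⟨hor, fun a => if a ∈ C then γ1 a else γ2 a, ?_, ?_⟩
    · rw [Finset.sum_union hCD]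
      have e1 : ∑ a ∈ C, G.cost (if a ∈ C then γ1 a else γ2 a)
          = ∑ a ∈ C, G.cost (γ1 a) := by
        apply Finset.sum_congr rfl; intro a ha; simp [ha]
      have e2 : ∑ a ∈ D, G.cost (if a ∈ C then γ1 a else γ2 a)
          = ∑ a ∈ D, G.cost (γ2 a) := by
        apply Finset.sum_congr rfl; intro a ha
        have : a ∉ C := fun hc => (Finset.disjoint_left.mp hCD hc) ha
        simp [this]
      rw [e1, e2]
      exact add_le_add hc1 hc2
    · intro q hq hag hnφ
      have hφq : ¬ Sat G q φ := by
        apply hf1 q hq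
        intro a ha
        have := hag a (Finset.mem_union_left _ ha)
        simpa [ha] using this
      have hψq : ¬ Sat G q ψ := by
        apply hf2 q hq
        intro a ha
        have hac : a ∉ C := fun hc => (Finset.disjoint_left.mp hCD hc) ha
        have := hag a (Finset.mem_union_right _ ha)
        simpa [hac] using this
      exact hψq (hnφ hφq)
  | @cause s C φ ψ hs =>
    intro G p hp
    simp only [Sat]
    rintro hN ⟨hψ, γ, hc, hf⟩ hφ
    refine ⟨hφ, γ, hc, ?_⟩
    intro q hq hag hsq
    exact hf q hq hag (hN q hq hsq)
  | @fair s C φ hs =>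
    intro G p hp
    simp only [Sat]
    rintro ⟨hφ, γ, hc, hf⟩ q hq hsq
    exact ⟨hsq, γ, hc, hf⟩
  | mp h1 h2 ih1 ih2 =>
    intro G p hp
    exact ih1 G p hp (ih2 G p hp)
  | nec h ih =>
    intro G p hp
    intro q hq
    exact ih G q hq
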